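/- Duplicator has a winning strategy in Dalmau's k-pebble relation game from A to B if and only if Duplicator has a winning strategy in the all-in-one k-pebble game from A to B. -/

import Mathlib

/-- A relational signature: a type of relation symbols with arities. -/
structure Signature where
  symb : Type
  ar : symb → ℕ

/-- A σ-structure: a universe with interpretations of the relation symbols. -/
structure Struct (σ : Signature) where
  carrier : Type
  rel : ∀ r : σ.symb, (Fin (σ.ar r) → carrier) → Prop

/-- σ-homomorphism. -/
def Hom {σ : Signature} (A B : Struct σ) (f : A.carrier → B.carrier) : Prop :=
  ∀ r x, A.rel r x → B.rel r (fun j => f (x j))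

/-- Sequences of pebble placements. -/
abbrev PSeq (k : ℕ) (α : Type) := List (Fin k × α)

/-- Universe of PR_k A: a play together with an index into it. -/
def PRW (k : ℕ) (α : Type) : Type := { p : PSeq k α × ℕ // p.2 < p.1.length }

def eltOf {k : ℕ} {α : Type} (w : PRW k α) : α := (w.1.1.get ⟨w.1.2, w.2⟩).2
def pebOf {k : ℕ} {α : Type} (w : PRW k α) : Fin k := (w.1.1.get ⟨w.1.2, w.2⟩).1

/-- The pebble p (placed at position i) does not reoccur at positions i+1,...,m of s. -/
def NoReoccur {k : ℕ} {α : Type} (s : PSeq k α) (i m : ℕ) (p : Fin k) : Prop :=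
  ∀ l (h : l < s.length), i < l → l ≤ m → (s.get ⟨l, h⟩).1 ≠ p

/-- The pebble-relation construction PR_k on σ-structures. -/
def PR {σ : Signature} (k : ℕ) (A : Struct σ) : Struct σ where
  carrier := PRW k A.carrier
  rel r x :=
    (∀ j j', (x j).1.1 = (x j').1.1) ∧
    (∀ j j', NoReoccur (x j).1.1 (x j).1.2 (x j').1.2 (pebOf (x j))) ∧
    A.rel r (fun j => eltOf (x j))

/-- Counit ε(s,i) = a_i. -/
def counit {k : ℕ} {α : Type} (w : PRW k α) : α := eltOf w

/-- Coextension f*(s,i) = (t,i) with same pebbles and j-th element f(s,j). -/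
def coext {k : ℕ} {α β : Type} (f : PRW k α → β) (w : PRW k α) : PRW k β :=
  ⟨(List.ofFn (fun j : Fin w.1.1.length => ((w.1.1.get j).1, f ⟨(w.1.1, j.1), j.2⟩)), w.1.2),
   by simpa using w.2⟩

/-- Comultiplication δ = (id)*. -/
def comult {k : ℕ} {α : Type} : PRW k α → PRW k (PRW k α) := coext id

/-- Functor action PR_k f = (f ∘ ε)*. -/
def PRmap {k : ℕ} {α β : Type} (f : α → β) : PRW k α → PRW k β :=
  coext (f ∘ counit)


/-- Last element pebbled with p in a play. -/
def lastP {k : ℕ} {α : Type} (s : List (Fin k × α)) (p : Fin k) : Option α :=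
  (s.reverse.find? (fun q => q.1 == p)).map Prod.snd

/-- The relation γ pairing, for each pebble, the last elements it pebbles in
the two plays. -/
def gammaRel {k : ℕ} {α β : Type} (s : List (Fin k × α)) (t : List (Fin k × β)) :
    Set (α × β) :=
  {ab | ∃ p, lastP s p = some ab.1 ∧ lastP t p = some ab.2}

/-- γ is a partial homomorphism from A to B. -/
def PartialHom {σ : Signature} (A B : Struct σ) (γ : Set (A.carrier × B.carrier)) : Prop :=
  ∀ (r : σ.symb) (a : Fin (σ.ar r) → A.carrier) (b : Fin (σ.ar r) → B.carrier),
    (∀ j, (a j, b j) ∈ γ) → A.rel r a → B.rel r b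

/-- t is a winning Duplicator response to Spoiler's play s in the all-in-one
k-pebble game: same pebbles at each index, and each prefix induces a partial
homomorphism on the active pebbled elements. -/
def WinResp {σ : Signature} (A B : Struct σ) {k : ℕ}
    (s : PSeq k A.carrier) (t : PSeq k B.carrier) : Prop :=
  t.map Prod.fst = s.map Prod.fst ∧
  ∀ i, PartialHom A B (gammaRel (s.take i) (t.take i))

/-- Duplicator has a winning strategy in the all-in-one k-pebble game. -/
def DupWinAIO {σ : Signature} (A B : Struct σ) (k : ℕ) : Prop :=
  ∀ s : PSeq k A.carrier, ∃ t : PSeq k B.carrier, WinResp A B s t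

/-- h : A ⇀ B (encoded with Option) preserves relations wherever defined. -/
def IsPHomFn {σ : Signature} (A B : Struct σ) (h : A.carrier → Option B.carrier) : Prop :=
  ∀ (r : σ.symb) (a : Fin (σ.ar r) → A.carrier) (b : Fin (σ.ar r) → B.carrier),
    (∀ j, h (a j) = some (b j)) → A.rel r a → B.rel r b

/-- Restriction of a partial function to a finite domain. -/
def restrictTo {α β : Type} [DecidableEq α] (I : Finset α) (h : α → Option β) :
    α → Option β :=
  fun a => if a ∈ I then h a else none

/-- Duplicator has a winning strategy in Dalmau's k-pebble relation game:
there is a family W of positions (I,T), containing the initial position,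
consisting of positions with |I| ≤ k and T a nonempty set of homomorphisms
A|_I → B, closed under Spoiler's shrinking moves and admitting a response to
every blowing move. -/
def DalmauWin {σ : Signature} (A B : Struct σ) [DecidableEq A.carrier] (k : ℕ) : Prop :=
  ∃ W : Set (Finset A.carrier × Set (A.carrier → Option B.carrier)),
    ((∅ : Finset A.carrier), ({fun _ => none} : Set (A.carrier → Option B.carrier))) ∈ W ∧
    (∀ P ∈ W, P.1.card ≤ k ∧ P.2.Nonempty ∧
      ∀ h ∈ P.2, (∀ a, (h a).isSome ↔ a ∈ P.1) ∧ IsPHomFn A B h) ∧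
    (∀ P ∈ W, ∀ I' ⊆ P.1, (I', (restrictTo I') '' P.2) ∈ W) ∧
    (∀ P ∈ W, ∀ I' : Finset A.carrier, P.1 ⊆ I' → I'.card ≤ k →
      ∃ T' : Set (A.carrier → Option B.carrier),
        (∀ h' ∈ T', restrictTo P.1 h' ∈ P.2) ∧ (I', T') ∈ W)

/-! ### Auxiliary lemmas about `lastP` -/

section AuxLemmas
variable {k : ℕ} {α β : Type}

theorem lastP_isSome (s : List (Fin k × α)) (p : Fin k) :
    (lastP s p).isSome ↔ p ∈ s.map Prod.fst := by
  unfold lastP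
  cases hf : s.reverse.find? (fun q => q.1 == p) with
  | none =>
    rw [List.find?_eq_none] at hf
    simp only [Option.map_none, Option.isSome_none, List.mem_map]
    constructor
    · intro h; simp at h
    · rintro ⟨x, hx, rfl⟩; exact (hf x (by simpa using hx) (by simp)).elim
  | some x =>
    have := List.find?_some hf
    have hm : x ∈ s := by simpa using List.mem_of_find?_eq_some hf
    simp only [Option.map_some, Option.isSome_some, true_iff, List.mem_map]
    exact ⟨x, hm, by simpa using this⟩

theorem lastP_singleton (q : Fin k) (b : α) (p : Fin k) :
    lastP [(q, b)] p = if p = q then some b else none := by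
  rcases eq_or_ne p q with h | h
  · subst h; simp [lastP, List.find?]
  · have hb : (q == p) = false := by simp [Ne.symm h]
    simp [lastP, List.find?, hb, h]

theorem lastP_append (s u : List (Fin k × α)) (p : Fin k) :
    lastP (s ++ u) p = (lastP u p).or (lastP s p) := by
  simp only [lastP, List.reverse_append, List.find?_append]
  cases u.reverse.find? (fun q => q.1 == p) <;> simp

theorem lastP_snoc (s : List (Fin k × α)) (q : Fin k) (b : α) (p : Fin k) :
    lastP (s ++ [(q, b)]) p = if p = q then some b else lastP s p := by
  rw [lastP_append, lastP_singleton]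
  by_cases h : p = q <;> simp [h]

theorem lastP_append_of_not_mem (s u : List (Fin k × α)) (p : Fin k)
    (h : p ∉ u.map Prod.fst) : lastP (s ++ u) p = lastP s p := by
  rw [lastP_append]
  have : lastP u p = none := by
    rw [← Option.not_isSome_iff_eq_none, lastP_isSome]; exact h
  simp [this]

/-- If `x` is the first `P`-element, `P'` implies `P`, and `P' x`, then `x` is the
first `P'`-element. -/
theorem find?_mono {l : List α} {P P' : α → Bool} {x : α}
    (hfind : l.find? P = some x) (hx : P' x = true)
    (himp : ∀ y ∈ l, P' y = true → P y = true) : l.find? P' = some x := by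
  induction l with
  | nil => simp at hfind
  | cons y l ih =>
    by_cases hy : P y
    · have : y = x := by simpa [List.find?_cons_of_pos hy] using hfind
      subst this
      simp [List.find?_cons_of_pos hx]
    · have hy' : ¬ P' y = true := fun h => hy (himp y (by simp) h)
      rw [List.find?_cons_of_neg (by simpa using hy')]
      exact ih (by simpa [List.find?_cons_of_neg (by simpa using hy)] using hfind)
        (fun z hz => himp z (by simp [hz]))

theorem take_append_le {γ : Type} (l u : List γ) {i : ℕ} (h : i ≤ l.length) :
    (l ++ u).take i = l.take i := by
  rw [List.take_append, Nat.sub_eq_zero_of_le h, List.take_zero,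
    List.append_nil]

theorem not_mem_map_fst_zip {p : Fin k} {Q : List (Fin k)} {L : List α}
    (h : p ∉ Q) : p ∉ (Q.zip L).map Prod.fst := by
  intro hc
  obtain ⟨x, hx, rfl⟩ := List.mem_map.1 hc
  exact h (List.of_mem_zip hx).1

theorem lastP_zip_mem (Q : List (Fin k)) (L : List α) (hn : Q.Nodup)
    (hl : Q.length = L.length) :
    ∀ a ∈ L, ∃ p ∈ Q, ∀ s : PSeq k α, lastP (s ++ Q.zip L) p = some a := by
  induction Q generalizing L with
  | nil =>
    cases L with
    | nil => intro a ha; simp at ha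
    | cons => simp at hl
  | cons q Q' ih =>
    cases L with
    | nil => simp at hl
    | cons a₀ L' =>
      obtain ⟨hq, hn'⟩ := List.nodup_cons.1 hn
      intro a ha
      rcases List.mem_cons.1 ha with rfl | ha'
      · refine ⟨q, List.mem_cons_self, fun s => ?_⟩
        rw [List.zip_cons_cons,
          show s ++ (q, a) :: Q'.zip L' = (s ++ [(q, a)]) ++ Q'.zip L' by simp,
          lastP_append_of_not_mem _ _ _ (not_mem_map_fst_zip hq),
          lastP_snoc, if_pos rfl]
      · obtain ⟨p, hp, hps⟩ := ih L' hn' (by simpa using hl) a ha'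
        refine ⟨p, List.mem_cons_of_mem _ hp, fun s => ?_⟩
        rw [List.zip_cons_cons,
          show s ++ (q, a₀) :: Q'.zip L' = (s ++ [(q, a₀)]) ++ Q'.zip L' by simp]
        exact hps _

theorem lastP_zip_covers (Q : List (Fin k)) (L : List α) (hn : Q.Nodup)
    (hl : Q.length = L.length) :
    ∀ p ∈ Q, ∀ s : PSeq k α, ∃ a ∈ L, lastP (s ++ Q.zip L) p = some a := by
  induction Q generalizing L with
  | nil => intro p hp; simp at hp
  | cons q Q' ih =>
    cases L with
    | nil => simp at hl
    | cons a₀ L' =>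
      obtain ⟨hq, hn'⟩ := List.nodup_cons.1 hn
      intro p hp s
      rcases List.mem_cons.1 hp with rfl | hp'
      · refine ⟨a₀, List.mem_cons_self, ?_⟩
        rw [List.zip_cons_cons,
          show s ++ (p, a₀) :: Q'.zip L' = (s ++ [(p, a₀)]) ++ Q'.zip L' by simp,
          lastP_append_of_not_mem _ _ _ (not_mem_map_fst_zip hq),
          lastP_snoc, if_pos rfl]
      · obtain ⟨a, ha, has⟩ := ih L' hn' (by simpa using hl) p hp' (s ++ [(q, a₀)])
        refine ⟨a, List.mem_cons_of_mem _ ha, ?_⟩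
        rw [List.zip_cons_cons,
          show s ++ (q, a₀) :: Q'.zip L' = (s ++ [(q, a₀)]) ++ Q'.zip L' by simp]
        exact has

/-- The set of currently pebbled elements of a play. -/
def activeSet [DecidableEq α] (s : PSeq k α) : Finset α :=
  ((List.finRange k).filterMap (lastP s)).toFinset

theorem mem_activeSet [DecidableEq α] {s : PSeq k α} {a : α} :
    a ∈ activeSet s ↔ ∃ p, lastP s p = some a := by
  simp [activeSet, List.mem_filterMap, List.mem_finRange]

theorem card_activeSet [DecidableEq α] (s : PSeq k α) : (activeSet s).card ≤ k :=
  calc (activeSet s).card ≤ ((List.finRange k).filterMap (lastP s)).length :=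
        List.toFinset_card_le _
    _ ≤ (List.finRange k).length := List.length_filterMap_le _ _
    _ = k := List.length_finRange

theorem activeSet_nil [DecidableEq α] : activeSet ([] : PSeq k α) = ∅ := by
  ext a; simp [mem_activeSet, lastP]

theorem restrictTo_restrictTo [DecidableEq α] {I I' : Finset α} (h : I ⊆ I')
    (f : α → Option β) : restrictTo I (restrictTo I' f) = restrictTo I f := by
  funext a
  by_cases ha : a ∈ I
  · simp [restrictTo, ha, h ha]
  · simp [restrictTo, ha]

theorem restrictTo_empty [DecidableEq α] (f : α → Option β) :
    restrictTo (∅ : Finset α) f = fun _ => none := by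
  funext a; simp [restrictTo]

/-- Duplicator's canonical partial function induced by plays `s` and `t`. -/
def hFn [DecidableEq α] (s : PSeq k α) (t : PSeq k β) : α → Option β :=
  fun a => ((List.finRange k).find? (fun p => decide (lastP s p = some a))).bind (lastP t)

theorem hFn_graph [DecidableEq α] {s : PSeq k α} {t : PSeq k β} {a : α} {b : β}
    (h : hFn s t a = some b) : ∃ p, lastP s p = some a ∧ lastP t p = some b := by
  obtain ⟨p, hp1, hp2⟩ := Option.bind_eq_some_iff.1 h
  have h1 := List.find?_some hp1
  exact ⟨p, by simpa using h1, hp2⟩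

theorem hFn_isSome [DecidableEq α] {s : PSeq k α} {t : PSeq k β}
    (hmap : t.map Prod.fst = s.map Prod.fst) (a : α) :
    (hFn s t a).isSome ↔ a ∈ activeSet s := by
  constructor
  · intro h
    obtain ⟨b, hb⟩ := Option.isSome_iff_exists.1 h
    obtain ⟨p, hp, -⟩ := hFn_graph hb
    exact mem_activeSet.2 ⟨p, hp⟩
  · intro ha
    obtain ⟨p, hp⟩ := mem_activeSet.1 ha
    have hfs : ((List.finRange k).find? (fun p => decide (lastP s p = some a))).isSome := by
      rw [List.find?_isSome]
      exact ⟨p, List.mem_finRange p, by simp [hp]⟩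
    obtain ⟨p₀, hp₀⟩ := Option.isSome_iff_exists.1 hfs
    have h1 := List.find?_some hp₀
    have hp₀s : lastP s p₀ = some a := by simpa using h1
    have hts : (lastP t p₀).isSome := by
      rw [lastP_isSome, hmap, ← lastP_isSome, hp₀s]; rfl
    unfold hFn
    rw [hp₀]
    simpa using hts

end AuxLemmas

section GammaAux
variable {σ : Signature} {A B : Struct σ} {k : ℕ}

/-- If the graph condition between `lastP`s holds via a function which is a partial
homomorphism, then `gammaRel` is a partial homomorphism. -/
theorem partialHom_of_graph (s : PSeq k A.carrier) (t : PSeq k B.carrier)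
    (h : A.carrier → Option B.carrier)
    (hg : ∀ p a, lastP s p = some a → ∃ b, h a = some b ∧ lastP t p = some b)
    (hph : IsPHomFn A B h) : PartialHom A B (gammaRel s t) := by
  intro r a b hab hrel
  refine hph r a b (fun j => ?_) hrel
  obtain ⟨p, hp1, hp2⟩ := hab j
  obtain ⟨b', hb', hp2'⟩ := hg p (a j) hp1
  rw [hp2] at hp2'
  exact hb'.trans (congrArg some (Option.some_inj.1 hp2').symm)

theorem winResp_full {s : PSeq k A.carrier} {t : PSeq k B.carrier}
    (hw : WinResp A B s t) : PartialHom A B (gammaRel s t) := by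
  have hlen : t.length = s.length := by
    have := congrArg List.length hw.1
    simpa using this
  have := hw.2 s.length
  rwa [List.take_of_length_le le_rfl, List.take_of_length_le hlen.le] at this

end GammaAux

section Direction1
variable {σ : Signature} {A B : Struct σ} [DecidableEq A.carrier] {k : ℕ}

theorem dalmau_to_aio (hD : DalmauWin A B k) : DupWinAIO A B k := by
  obtain ⟨W, hInit, hValid, hShrink, hBlow⟩ := hD
  have Aux : ∀ s : PSeq k A.carrier, ∃ T, (activeSet s, T) ∈ W ∧
      ∀ h ∈ T, ∃ t : PSeq k B.carrier, t.map Prod.fst = s.map Prod.fst ∧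
        (∀ p a, lastP s p = some a → ∃ b, h a = some b ∧ lastP t p = some b) ∧
        (∀ i, PartialHom A B (gammaRel (s.take i) (t.take i))) := by
    intro s
    induction s using List.reverseRecOn with
    | nil =>
      refine ⟨{fun _ => none}, by rw [activeSet_nil]; exact hInit, ?_⟩
      intro h hh
      rw [Set.mem_singleton_iff] at hh
      subst hh
      have hph : IsPHomFn A B (fun _ => (none : Option B.carrier)) := by
        have := (hValid _ hInit).2.2 (fun _ => none) rfl
        exact this.2
      refine ⟨[], rfl, ?_, ?_⟩
      · intro p a ha; simp [lastP] at ha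
      · intro i
        simp only [List.take_nil]
        exact partialHom_of_graph _ _ (fun _ => none)
          (fun p a ha => by simp [lastP] at ha) hph
    | append_singleton s x ih =>
      obtain ⟨p, a⟩ := x
      obtain ⟨T, hTW, hT⟩ := ih
      set I := activeSet s with hI
      set I₂ := activeSet (s ++ [(p, a)]) with hI₂
      have hSh := hShrink _ hTW (I ∩ I₂) Finset.inter_subset_left
      obtain ⟨T₂, hresp, hT₂W⟩ :=
        hBlow _ hSh I₂ Finset.inter_subset_right (card_activeSet _)
      refine ⟨T₂, hT₂W, ?_⟩
      intro h' hh'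
      obtain ⟨h, hhT, heq⟩ := hresp h' hh'
      obtain ⟨t, ht1, ht2, ht3⟩ := hT h hhT
      have ha2 : a ∈ I₂ := mem_activeSet.2 ⟨p, by rw [lastP_snoc, if_pos rfl]⟩
      have hvalid₂ := (hValid _ hT₂W).2.2 h' hh'
      have hsome : (h' a).isSome := (hvalid₂.1 a).2 ha2
      obtain ⟨b, hb⟩ := Option.isSome_iff_exists.1 hsome
      have hlen : t.length = s.length := by
        have := congrArg List.length ht1; simpa using this
      have key : ∀ q a₀, lastP (s ++ [(p, a)]) q = some a₀ →
          ∃ b₀, h' a₀ = some b₀ ∧ lastP (t ++ [(p, b)]) q = some b₀ := by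
        intro q a₀ hq
        rw [lastP_snoc] at hq
        split_ifs at hq with hqp
        · obtain rfl : a = a₀ := Option.some_inj.1 hq
          exact ⟨b, hb, by rw [lastP_snoc, if_pos hqp]⟩
        · obtain ⟨b₀, hb₀, htq⟩ := ht2 q a₀ hq
          have ha₀J : a₀ ∈ I ∩ I₂ := Finset.mem_inter.2
            ⟨mem_activeSet.2 ⟨q, hq⟩,
             mem_activeSet.2 ⟨q, by rw [lastP_snoc, if_neg hqp]; exact hq⟩⟩
          have hha : h a₀ = h' a₀ := by
            have := congrFun heq a₀
            simpa [restrictTo, ha₀J] using this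
          exact ⟨b₀, hha ▸ hb₀, by rw [lastP_snoc, if_neg hqp]; exact htq⟩
      refine ⟨t ++ [(p, b)], by simp [ht1], key, ?_⟩
      intro i
      by_cases hi : i ≤ s.length
      · rw [take_append_le _ _ hi, take_append_le _ _ (hlen ▸ hi)]
        exact ht3 i
      · push_neg at hi
        rw [List.take_of_length_le (by simpa using hi),
            List.take_of_length_le (by simp [hlen]; omega)]
        exact partialHom_of_graph _ _ h' key hvalid₂.2
  intro s
  obtain ⟨T, hTW, hT⟩ := Aux s
  obtain ⟨h, hh⟩ := (hValid _ hTW).2.1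
  obtain ⟨t, h1, _, h3⟩ := hT h hh
  exact ⟨t, h1, h3⟩

end Direction1


section Direction2
variable {σ : Signature} {A B : Struct σ} [DecidableEq A.carrier] {k : ℕ}

theorem aio_to_dalmau (hA : DupWinAIO A B k) : DalmauWin A B k := by
  classical
  refine ⟨{P | P.1.card ≤ k ∧ ∃ s : PSeq k A.carrier, P.1 ⊆ activeSet s ∧
    P.2 = {h | ∃ t, WinResp A B s t ∧ h = restrictTo P.1 (hFn s t)}}, ?_, ?_, ?_, ?_⟩
  · -- initial position
    refine ⟨by simp, [], by simp, ?_⟩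
    ext h
    simp only [Set.mem_setOf_eq, Set.mem_singleton_iff]
    constructor
    · rintro rfl
      obtain ⟨t, ht⟩ := hA []
      exact ⟨t, ht, (restrictTo_empty _).symm⟩
    · rintro ⟨t, -, rfl⟩
      exact restrictTo_empty _
  · -- validity of positions
    rintro ⟨I, T⟩ ⟨hcard, s, hsub, hT⟩
    dsimp only at hT hcard hsub ⊢
    subst hT
    refine ⟨hcard, ?_, ?_⟩
    · obtain ⟨t, ht⟩ := hA s
      exact ⟨_, ⟨t, ht, rfl⟩⟩
    · rintro h ⟨t, hwin, rfl⟩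
      constructor
      · intro a
        by_cases ha : a ∈ I
        · simp only [restrictTo, if_pos ha]
          rw [hFn_isSome hwin.1]
          simp [ha, hsub ha]
        · simp [restrictTo, ha]
      · intro r a b hj hrel
        refine winResp_full hwin r a b (fun j => ?_) hrel
        have hja := hj j
        simp only [restrictTo] at hja
        by_cases h' : a j ∈ I
        · rw [if_pos h'] at hja
          obtain ⟨p2, h1, h2⟩ := hFn_graph hja
          exact ⟨p2, h1, h2⟩
        · rw [if_neg h'] at hja
          simp at hja
  · -- shrinking moves
    rintro ⟨I, T⟩ ⟨hcard, s, hsub, hT⟩ I' hI'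
    dsimp only at hT hcard hsub hI' ⊢
    subst hT
    refine ⟨le_trans (Finset.card_le_card hI') hcard, s, hI'.trans hsub, ?_⟩
    ext h
    simp only [Set.mem_image, Set.mem_setOf_eq]
    constructor
    · rintro ⟨h₀, ⟨t, hwin, rfl⟩, rfl⟩
      exact ⟨t, hwin, restrictTo_restrictTo hI' _⟩
    · rintro ⟨t, hwin, rfl⟩
      exact ⟨restrictTo I (hFn s t), ⟨t, hwin, rfl⟩, restrictTo_restrictTo hI' _⟩
  · -- blowing moves
    rintro ⟨I, T⟩ ⟨hcard, s, hsub, hT⟩ I' hII' hcard'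
    dsimp only at hT hcard hsub hII' ⊢
    subst hT
    have hgI : ∀ a ∈ I, ∃ pa,
        (List.finRange k).find? (fun p => decide (lastP s p = some a)) = some pa ∧
        lastP s pa = some a := by
      intro a ha
      obtain ⟨p, hp⟩ := mem_activeSet.1 (hsub ha)
      have hs : ((List.finRange k).find? (fun p => decide (lastP s p = some a))).isSome := by
        rw [List.find?_isSome]
        exact ⟨p, List.mem_finRange p, by simp [hp]⟩
      obtain ⟨pa, hpa⟩ := Option.isSome_iff_exists.1 hs
      have h1 := List.find?_some hpa
      exact ⟨pa, hpa, by simpa using h1⟩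
    set used : Finset (Fin k) :=
      (I.image (fun a => (List.finRange k).find? (fun p => decide (lastP s p = some a)))).eraseNone
      with hused
    have hcard_used : used.card ≤ I.card := by
      calc used.card
          ≤ (I.image (fun a =>
              (List.finRange k).find? (fun p => decide (lastP s p = some a)))).card := by
            apply Finset.card_le_card_of_injOn some
            · intro p hp
              exact Finset.mem_eraseNone.1 hp
            · intro _ _ _ _ h
              exact Option.some_inj.1 h
        _ ≤ I.card := Finset.card_image_le
    set avail : Finset (Fin k) := Finset.univ \ used with havail
    have hcard_avail : avail.card = k - used.card := by
      rw [havail, Finset.card_sdiff_of_subset (Finset.subset_univ _)]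
      simp
    set L : List A.carrier := (I' \ I).toList with hL
    set m : ℕ := L.length with hm
    have hmcard : m = I'.card - I.card := by
      rw [hm, hL, Finset.length_toList, Finset.card_sdiff_of_subset hII']
    have hm_avail : m ≤ avail.card := by
      rw [hmcard, hcard_avail]
      omega
    set Q : List (Fin k) := avail.toList.take m with hQ
    have hQlen : Q.length = m := by
      rw [hQ, List.length_take, Finset.length_toList]
      omega
    have hQnodup : Q.Nodup := List.Nodup.sublist (List.take_sublist _ _) (Finset.nodup_toList _)
    have hQsub : ∀ p ∈ Q, p ∈ avail := by
      intro p hp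
      rw [← Finset.mem_toList]
      exact (List.take_sublist _ _).subset hp
    have hQL : Q.length = L.length := hQlen
    set ext : PSeq k A.carrier := Q.zip L with hext
    have hextfst : ext.map Prod.fst = Q := List.map_fst_zip (le_of_eq hQL)
    set s' : PSeq k A.carrier := s ++ ext with hs'
    have hnotQ : ∀ a ∈ I, ∀ pa,
        (List.finRange k).find? (fun p => decide (lastP s p = some a)) = some pa →
        pa ∉ Q := by
      intro a ha pa hpa hpaQ
      have hmem : pa ∈ used :=
        Finset.mem_eraseNone.2 (Finset.mem_image.2 ⟨a, ha, hpa⟩)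
      exact (Finset.mem_sdiff.1 (hQsub pa hpaQ)).2 hmem
    have hlastQ_not : ∀ p, p ∉ Q → lastP s' p = lastP s p := by
      intro p hp
      exact lastP_append_of_not_mem _ _ _ (by rw [hextfst]; exact hp)
    have hI'active : I' ⊆ activeSet s' := by
      intro a ha
      by_cases haI : a ∈ I
      · obtain ⟨pa, hpa1, hpa2⟩ := hgI a haI
        refine mem_activeSet.2 ⟨pa, ?_⟩
        rw [hlastQ_not pa (hnotQ a haI pa hpa1)]
        exact hpa2
      · have haL : a ∈ L := by
          rw [hL, Finset.mem_toList]
          exact Finset.mem_sdiff.2 ⟨ha, haI⟩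
        obtain ⟨p, hp, hps⟩ := lastP_zip_mem Q L hQnodup hQL a haL
        exact mem_activeSet.2 ⟨p, hps s⟩
    refine ⟨{h | ∃ t', WinResp A B s' t' ∧ h = restrictTo I' (hFn s' t')}, ?_,
      hcard', s', hI'active, rfl⟩
    rintro h' ⟨t', hwin', rfl⟩
    set n : ℕ := s.length with hn
    set t : PSeq k B.carrier := t'.take n with ht
    have hmap' : t'.map Prod.fst = s'.map Prod.fst := hwin'.1
    have hlen' : t'.length = s'.length := by
      have := congrArg List.length hmap'
      simpa using this
    have hts : t.map Prod.fst = s.map Prod.fst := by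
      rw [ht, List.map_take, hmap', hs', List.map_append,
        take_append_le _ _ (by simp [hn]), List.take_of_length_le (by simp [hn])]
    have hwin : WinResp A B s t := by
      refine ⟨hts, fun i => ?_⟩
      by_cases hi : i ≤ n
      · have e1 : s.take i = s'.take i := (take_append_le s ext (hn ▸ hi)).symm
        have e2 : t.take i = t'.take i := by
          rw [ht, List.take_take, min_eq_left hi]
        rw [e1, e2]
        exact hwin'.2 i
      · push_neg at hi
        have e1 : s.take i = s := List.take_of_length_le (by omega)
        have e2 : t.take i = t := List.take_of_length_le
          (by rw [ht, List.length_take]; omega)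
        have e3 : s'.take n = s := by
          rw [hs', take_append_le s ext (by omega), List.take_of_length_le (by omega)]
        rw [e1, e2]
        have hfin := hwin'.2 n
        rwa [e3, ← ht] at hfin
    refine ⟨t, hwin, ?_⟩
    rw [restrictTo_restrictTo hII']
    funext a
    by_cases ha : a ∈ I
    · simp only [restrictTo, if_pos ha]
      obtain ⟨pa, hpa1, hpa2⟩ := hgI a ha
      have hpaQ : pa ∉ Q := hnotQ a ha pa hpa1
      have hfind' : (List.finRange k).find? (fun p => decide (lastP s' p = some a)) =
          some pa := by
        refine find?_mono hpa1 (decide_eq_true ?_) ?_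
        · rw [hlastQ_not pa hpaQ]; exact hpa2
        · intro q hq hq'
          have hq'' : lastP s' q = some a := of_decide_eq_true hq'
          by_cases hqQ : q ∈ Q
          · exfalso
            obtain ⟨a', ha', hqa'⟩ := lastP_zip_covers Q L hQnodup hQL q hqQ s
            have hqa'' : lastP s' q = some a' := by rw [hs', hext]; exact hqa'
            rw [hq''] at hqa''
            obtain rfl : a = a' := Option.some_inj.1 hqa''
            have : a ∈ I' \ I := by rw [← Finset.mem_toList, ← hL]; exact ha'
            exact (Finset.mem_sdiff.1 this).2 ha
          · exact decide_eq_true (by rw [← hlastQ_not q hqQ]; exact hq'')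
      have hdropfst : (t'.drop n).map Prod.fst = Q := by
        rw [List.map_drop, hmap', hs', List.map_append]
        have hln : (s.map Prod.fst).length = n := by simp [hn]
        rw [← hln, List.drop_left, hextfst]
      have hsplit : t ++ t'.drop n = t' := by rw [ht, List.take_append_drop]
      have ht'pa : lastP t' pa = lastP t pa := by
        calc lastP t' pa = lastP (t ++ t'.drop n) pa := by rw [hsplit]
          _ = lastP t pa := lastP_append_of_not_mem _ _ _
              (by rw [hdropfst]; exact hpaQ)
      show hFn s' t' a = hFn s t a
      simp only [hFn]
      rw [hfind', hpa1]
      simp only [Option.bind_some]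
      exact ht'pa
    · simp [restrictTo, ha]

end Direction2


/-- Duplicator wins Dalmau's k-pebble relation game from A to B
iff Duplicator wins the all-in-one k-pebble game from A to B. -/
theorem dalmau_iff_aio (σ : Signature) (A B : Struct σ) [DecidableEq A.carrier] (k : ℕ) :
    DalmauWin A B k ↔ DupWinAIO A B k :=
  ⟨fun h => dalmau_to_aio h, fun h => aio_to_dalmau h⟩
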